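/- If (N, e_ρ, R) with |R| = |E| − |V| + 1 is orientable, then its orientation is unique: any two directed binary phylogenetic networks with underlying network N, root subdividing e_ρ, and reticulation set R are equal (assign the same direction to every edge). -/

import Mathlib

open Classical

/-- Indegree of a vertex in a digraph given by a relation. -/
noncomputable def inDeg {W : Type} (D : W → W → Prop) (b : W) : ℕ :=
  Nat.card {a : W // D a b}

/-- Outdegree of a vertex in a digraph given by a relation. -/
noncomputable def outDeg {W : Type} (D : W → W → Prop) (a : W) : ℕ :=
  Nat.card {b : W // D a b}

/-- A digraph is acyclic if it has no directed cycle. -/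
def DigraphAcyclic {W : Type} (D : W → W → Prop) : Prop :=
  ∀ a : W, ¬ Relation.TransGen D a a

/-- `D` is an orientation of the undirected graph `H`: every arc of `D` lies on an
edge of `H`, and every edge of `H` is given exactly one direction. -/
def IsOrientationOf {W : Type} (H : SimpleGraph W) (D : W → W → Prop) : Prop :=
  (∀ a b, D a b → H.Adj a b) ∧ (∀ a b, H.Adj a b → (D a b ↔ ¬ D b a))

/-- The graph obtained from `G` by subdividing the edge `{u,v}` with a new vertex
(represented by `none`). -/
def subdivide {V : Type} (G : SimpleGraph V) (u v : V) : SimpleGraph (Option V) where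
  Adj a b := match a, b with
    | some a', some b' => G.Adj a' b' ∧ ¬ (s(a', b') = s(u, v))
    | some a', none => a' = u ∨ a' = v
    | none, some b' => b' = u ∨ b' = v
    | none, none => False
  symm := by
    constructor
    intro a b h
    match a, b with
    | some a', some b' =>
        exact ⟨h.1.symm, fun he => h.2 (by rwa [Sym2.eq_swap] at he)⟩
    | some a', none => exact h
    | none, some b' => exact h
  loopless := by
    constructor
    intro a h
    match a with
    | some a' => exact G.irrefl h.1
    | none => exact h

/-- An undirected binary phylogenetic network: a connected graph in which every
vertex has degree `1` (a leaf) or degree `3`. -/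
def IsUndirBinNet {V : Type} [Fintype V] (G : SimpleGraph V) [DecidableRel G.Adj] : Prop :=
  G.Connected ∧ ∀ w : V, G.degree w = 1 ∨ G.degree w = 3

/-- An orientation of the binary network `G` with root subdividing the edge `{u,v}`
and reticulation set `R`: an acyclic orientation of the subdivided graph in which
the root has indegree `0`, the vertices of `R` have indegree `2` and all other
vertices have indegree `1`. -/
def IsBinOrientation {V : Type} [Fintype V] (G : SimpleGraph V) (u v : V) (R : Set V)
    (D : Option V → Option V → Prop) : Prop :=
  IsOrientationOf (subdivide G u v) D ∧ DigraphAcyclic D ∧ inDeg D none = 0 ∧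
    ∀ w : V, (w ∈ R ↔ inDeg D (some w) = 2) ∧ (w ∉ R → inDeg D (some w) = 1)


/-- If two orientations of the same graph have equal indegrees everywhere and the
first is acyclic, then every arc of the first is an arc of the second. -/
lemma dir_subset {W : Type} [Finite W] (H : SimpleGraph W) (D₁ D₂ : W → W → Prop)
    (ho₁ : IsOrientationOf H D₁) (ho₂ : IsOrientationOf H D₂)
    (hac : DigraphAcyclic D₁)
    (hdeg : ∀ b : W, inDeg D₁ b = inDeg D₂ b) :
    ∀ a b : W, D₁ a b → D₂ a b := by
  classical
  -- F is the disagreement relation (as oriented by D₁)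
  set F : W → W → Prop := fun a b => D₁ a b ∧ D₂ b a with hF
  -- flipping: for adjacent pairs, ¬ D₂ a b ↔ D₂ b a
  have flip₂ : ∀ a b : W, D₁ a b → (¬ D₂ a b ↔ D₂ b a) := by
    intro a b h
    have hadj := ho₁.1 a b h
    have h2 := ho₂.2 a b hadj
    have h3 := ho₂.2 b a hadj.symm
    tauto
  -- balance: at each vertex, #incoming disagreements = #outgoing disagreements
  have hbal : ∀ b : W, {a | F a b}.ncard = {c | F b c}.ncard := by
    intro b
    have hsplit₁ : {a | D₁ a b} = {a | D₁ a b ∧ D₂ a b} ∪ {a | F a b} := by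
      ext x
      simp only [Set.mem_setOf_eq, Set.mem_union, hF]
      constructor
      · intro hx
        by_cases hd : D₂ x b
        · exact Or.inl ⟨hx, hd⟩
        · exact Or.inr ⟨hx, (flip₂ x b hx).mp hd⟩
      · rintro (⟨hx, _⟩ | ⟨hx, _⟩) <;> exact hx
    have hdisj₁ : Disjoint {a | D₁ a b ∧ D₂ a b} {a | F a b} := by
      rw [Set.disjoint_left]
      rintro x ⟨hx1, hx2⟩ ⟨hx3, hx4⟩
      exact ((flip₂ x b hx1).mpr hx4) hx2
    have hsplit₂ : {a | D₂ a b} = {a | D₁ a b ∧ D₂ a b} ∪ {c | F b c} := by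
      ext x
      simp only [Set.mem_setOf_eq, Set.mem_union, hF]
      constructor
      · intro hx
        by_cases hd : D₁ x b
        · exact Or.inl ⟨hd, hx⟩
        · refine Or.inr ⟨?_, hx⟩
          have hadj := ho₂.1 x b hx
          have h2 := ho₁.2 x b hadj
          have h3 := ho₁.2 b x hadj.symm
          tauto
      · rintro (⟨_, hx⟩ | ⟨_, hx⟩) <;> exact hx
    have hdisj₂ : Disjoint {a | D₁ a b ∧ D₂ a b} {c | F b c} := by
      rw [Set.disjoint_left]
      rintro x ⟨hx1, hx2⟩ ⟨hx3, hx4⟩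
      exact ((ho₁.2 b x (ho₁.1 x b hx1).symm).mp hx3) hx1
    have e1 : inDeg D₁ b = {a | D₁ a b ∧ D₂ a b}.ncard + {a | F a b}.ncard := by
      have : inDeg D₁ b = {a | D₁ a b}.ncard := (Nat.card_coe_set_eq _).symm
      rw [this, hsplit₁, Set.ncard_union_eq hdisj₁ (Set.toFinite _) (Set.toFinite _)]
    have e2 : inDeg D₂ b = {a | D₁ a b ∧ D₂ a b}.ncard + {c | F b c}.ncard := by
      have : inDeg D₂ b = {a | D₂ a b}.ncard := (Nat.card_coe_set_eq _).symm
      rw [this, hsplit₂, Set.ncard_union_eq hdisj₂ (Set.toFinite _) (Set.toFinite _)]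
    have := hdeg b
    omega
  -- if there is no disagreement, done
  by_contra hcon
  push_neg at hcon
  obtain ⟨a, b, h1, h2⟩ := hcon
  have hFab : F a b := ⟨h1, (flip₂ a b h1).mp h2⟩
  -- every vertex with an incoming disagreement has an outgoing disagreement
  have step : ∀ w : W, (∃ x, F x w) → ∃ c, F w c := by
    intro w ⟨x, hx⟩
    have h1 : 0 < ({a | F a w}).ncard :=
      (Set.ncard_pos (Set.toFinite _)).mpr ⟨x, hx⟩
    rw [hbal w] at h1
    obtain ⟨c, hc⟩ := (Set.ncard_pos (Set.toFinite _)).mp h1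
    exact ⟨c, hc⟩
  -- build an infinite F-path
  let g : ℕ → {w : W // ∃ x, F x w} := fun n =>
    Nat.rec ⟨b, a, hFab⟩
      (fun _ p => ⟨Classical.choose (step p.1 p.2), p.1, Classical.choose_spec (step p.1 p.2)⟩) n
  have hstep : ∀ n : ℕ, F (g n).1 (g (n + 1)).1 := fun n =>
    Classical.choose_spec (step (g n).1 (g n).2)
  have htrans : ∀ j i : ℕ, i < j → Relation.TransGen D₁ (g i).1 (g j).1 := by
    intro j
    induction j with
    | zero => omega
    | succ j ih =>
      intro i hi
      rcases Nat.lt_or_ge i j with h | h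
      · exact (ih i h).tail (hstep j).1
      · have : i = j := by omega
        subst this
        exact Relation.TransGen.single (hstep i).1
  obtain ⟨i, j, hij, hfij⟩ :=
    Finite.exists_ne_map_eq_of_infinite (fun n => (g n).1)
  rcases Nat.lt_or_ge i j with h | h
  · exact hac _ (hfij ▸ htrans j i h)
  · have h' : j < i := by omega
    exact hac _ (hfij ▸ htrans i j h')

/-- Uniqueness of orientations: any two orientations of `(N, e_ρ, R)` (with
`|R| = |E| − |V| + 1`) assign the same direction to every edge. -/
theorem orientation_unique {V X : Type} [Fintype V] [DecidableEq V]
    (G : SimpleGraph V) [DecidableRel G.Adj] (hnet : IsUndirBinNet G)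
    (labels : X ≃ {w : V // G.degree w = 1})
    (u v : V) (he : G.Adj u v) (R : Set V)
    (hcard : R.ncard + Fintype.card V = G.edgeSet.ncard + 1)
    (D₁ D₂ : Option V → Option V → Prop)
    (h₁ : IsBinOrientation G u v R D₁) (h₂ : IsBinOrientation G u v R D₂) :
    ∀ a b : Option V, D₁ a b ↔ D₂ a b := by
  have hdeg : ∀ b : Option V, inDeg D₁ b = inDeg D₂ b := by
    intro b
    match b with
    | none => rw [h₁.2.2.1, h₂.2.2.1]
    | some w =>
      by_cases hw : w ∈ R
      · rw [((h₁.2.2.2 w).1).mp hw, ((h₂.2.2.2 w).1).mp hw]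
      · rw [(h₁.2.2.2 w).2 hw, (h₂.2.2.2 w).2 hw]
  intro a b
  constructor
  · exact dir_subset (subdivide G u v) D₁ D₂ h₁.1 h₂.1 h₁.2.1 hdeg a b
  · exact dir_subset (subdivide G u v) D₂ D₁ h₂.1 h₁.1 h₂.2.1 (fun b => (hdeg b).symm) a b
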